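/- arXiv:2006.10215 — 4 statements merged into one kernel-verified Lean document; each statement's English description precedes it below -/
import Mathlib

section
/- For even M and real s, the sum of the elements of the Huffman sequence H^N(s) (with N = 2M+3) equals F_{M+2}(s) + F_M(s). That is, the zero-frequency Fourier coefficient of H^N(s) is F_{M+2}(s) + F_M(s). -/
private lemma sum_Ioc_split (f : ℤ → ℝ) {a b c : ℤ} (hab : a ≤ b) (hbc : b ≤ c) :
    ∑ i ∈ Finset.Ioc a c, f i = ∑ i ∈ Finset.Ioc a b, f i + ∑ i ∈ Finset.Ioc b c, f i := by
  rw [← Finset.Ioc_union_Ioc_eq_Ioc hab hbc]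
  exact Finset.sum_union (by
    rw [Finset.disjoint_left]
    intro x hx hx'
    simp only [Finset.mem_Ioc] at hx hx'
    omega)

private lemma Ioc_succ_singleton (b : ℤ) : Finset.Ioc b (b + 1) = {b + 1} := by
  ext i; simp only [Finset.mem_Ioc, Finset.mem_singleton]; omega

private lemma sum_Ioc_top (f : ℤ → ℝ) {a b : ℤ} (hab : a ≤ b) :
    ∑ i ∈ Finset.Ioc a (b + 1), f i = ∑ i ∈ Finset.Ioc a b, f i + f (b + 1) := by
  rw [sum_Ioc_split f hab (by omega), Ioc_succ_singleton, Finset.sum_singleton]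

private lemma tel (s : ℝ) (F : ℤ → ℝ)
    (hrec : ∀ n : ℤ, F (n + 2) = s * F (n + 1) + F n) (c : ℤ) :
    ∀ n : ℕ, ∀ a : ℤ, ∑ i ∈ Finset.Ioc a (a + n), s * F (i + c) =
      F (a + n + c + 1) + F (a + n + c) - F (a + c + 1) - F (a + c) := by
  intro n
  induction n with
  | zero => intro a; simp
  | succ n ih =>
    intro a
    have h1 : (a + (n + 1 : ℕ) : ℤ) = (a + n) + 1 := by push_cast; ring
    rw [h1, sum_Ioc_top _ (by omega), ih a]
    have h2 := hrec (a + n + c)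
    ring_nf at h2 ⊢
    linarith [h2]

private lemma negF (s : ℝ) (F : ℤ → ℝ) (h0 : F 0 = 0) (h1 : F 1 = 1)
    (hrec : ∀ n : ℤ, F (n + 2) = s * F (n + 1) + F n) :
    ∀ n : ℕ, F (-(n : ℤ)) = (-1 : ℝ) ^ (n + 1) * F n ∧
      F (-(n : ℤ) - 1) = (-1 : ℝ) ^ n * F (n + 1) := by
  intro n
  induction n with
  | zero =>
    constructor
    · simp [h0]
    · have h2 := hrec (-1)
      norm_num at h2 ⊢
      rw [h0] at h2
      linarith
  | succ n ih =>
    obtain ⟨A, B⟩ := ih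
    constructor
    · have e : (-(((n : ℤ) + 1)) : ℤ) = -(n : ℤ) - 1 := by ring
      push_cast
      rw [e, B, pow_succ, pow_succ]
      ring
    · have h2 := hrec (-(n : ℤ) - 2)
      have e1 : (-(n : ℤ) - 2 + 2 : ℤ) = -(n : ℤ) := by ring
      have e2 : (-(n : ℤ) - 2 + 1 : ℤ) = -(n : ℤ) - 1 := by ring
      rw [e1, e2, A, B] at h2
      have e3 : (-(((n : ℕ) : ℤ) + 1) - 1 : ℤ) = -(n : ℤ) - 2 := by ring
      push_cast
      rw [e3]
      have h3 := hrec n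
      have : F (-(n : ℤ) - 2) = (-1 : ℝ) ^ (n + 1) * F n - s * ((-1 : ℝ) ^ n * F (n + 1)) := by
        linarith
      rw [this, show ((n : ℤ) + 1 + 1) = (n : ℤ) + 2 by ring, h3, pow_succ]
      ring

theorem huffman_sum_eq (s : ℝ) (F : ℤ → ℝ)
    (h0 : F 0 = 0) (h1 : F 1 = 1)
    (hrec : ∀ n : ℤ, F (n + 2) = s * F (n + 1) + F n)
    (M : ℤ) (hM2 : 2 ≤ M) (hMeven : Even M)
    (H : ℤ → ℝ)
    (hH : ∀ i : ℤ, H i =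
      if i = 1 then 1
      else if 2 ≤ i ∧ i ≤ M + 1 then 2 * s * F (i - 1)
      else if i = M + 2 then s * F (M + 1) - 2 * F M
      else if M + 3 ≤ i ∧ i ≤ 2 * M + 2 then 2 * s * F (i - (2 * M + 3))
      else if i = 2 * M + 3 then -1
      else 0) :
    ∑ i ∈ Finset.Icc (1 : ℤ) (2 * M + 3), H i = F (M + 2) + F M := by
  set Mt := M.toNat with hMt
  have hMtM : (Mt : ℤ) = M := Int.toNat_of_nonneg (by omega)
  -- split the sum
  rw [Finset.Icc_eq_cons_Ioc (by omega), Finset.sum_cons]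
  rw [sum_Ioc_split H (b := M + 1) (by omega) (by omega),
      sum_Ioc_split H (a := M + 1) (b := M + 2) (by omega) (by omega),
      sum_Ioc_split H (a := M + 2) (b := 2 * M + 2) (by omega) (by omega)]
  have hsing1 : Finset.Ioc (M + 1) (M + 2) = {M + 2} := by
    have := Ioc_succ_singleton (M + 1); rw [show M + 1 + 1 = M + 2 by ring] at this; exact this
  have hsing2 : Finset.Ioc (2 * M + 2) (2 * M + 3) = {2 * M + 3} := by
    have := Ioc_succ_singleton (2 * M + 2); rw [show 2 * M + 2 + 1 = 2 * M + 3 by ring] at this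
    exact this
  rw [hsing1, hsing2, Finset.sum_singleton, Finset.sum_singleton]
  -- evaluate H on each piece
  have hH1 : H 1 = 1 := by rw [hH]; norm_num
  have hHM2 : H (M + 2) = s * F (M + 1) - 2 * F M := by
    rw [hH]; rw [if_neg (by omega), if_neg (by omega), if_pos rfl]
  have hHN : H (2 * M + 3) = -1 := by
    rw [hH]; rw [if_neg (by omega), if_neg (by omega), if_neg (by omega), if_neg (by omega),
      if_pos rfl]
  have hS1 : ∑ i ∈ Finset.Ioc 1 (M + 1), H i = 2 * ∑ i ∈ Finset.Ioc 1 (M + 1), s * F (i + (-1)) := by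
    rw [Finset.mul_sum]
    apply Finset.sum_congr rfl
    intro i hi
    simp only [Finset.mem_Ioc] at hi
    rw [hH, if_neg (by omega), if_pos (by omega)]
    ring_nf
  have hS2 : ∑ i ∈ Finset.Ioc (M + 2) (2 * M + 2), H i
      = 2 * ∑ i ∈ Finset.Ioc (M + 2) (2 * M + 2), s * F (i + (-(2 * M + 3))) := by
    rw [Finset.mul_sum]
    apply Finset.sum_congr rfl
    intro i hi
    simp only [Finset.mem_Ioc] at hi
    rw [hH, if_neg (by omega), if_neg (by omega), if_neg (by omega), if_pos (by omega)]
    ring_nf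
  rw [hH1, hHM2, hHN, hS1, hS2]
  -- telescoping
  have ht1 : ∑ i ∈ Finset.Ioc 1 ((1 : ℤ) + Mt), s * F (i + (-1)) =
      F (1 + Mt + (-1) + 1) + F (1 + Mt + (-1)) - F (1 + (-1) + 1) - F (1 + (-1)) :=
    tel s F hrec (-1) Mt 1
  have ht2 : ∑ i ∈ Finset.Ioc (M + 2) ((M + 2) + Mt), s * F (i + (-(2 * M + 3))) =
      F ((M + 2) + Mt + (-(2 * M + 3)) + 1) + F ((M + 2) + Mt + (-(2 * M + 3)))
        - F ((M + 2) + (-(2 * M + 3)) + 1) - F ((M + 2) + (-(2 * M + 3))) :=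
    tel s F hrec (-(2 * M + 3)) Mt (M + 2)
  rw [hMtM] at ht1 ht2
  rw [show (1 : ℤ) + M = M + 1 by ring] at ht1
  rw [show M + 2 + M = 2 * M + 2 by ring] at ht2
  rw [ht1, ht2]
  -- negative-index values
  obtain ⟨A, B⟩ := negF s F h0 h1 hrec Mt
  have hev : Even Mt := by
    rw [← Int.even_coe_nat, hMtM]; exact hMeven
  have hA : F (-M) = -F M := by
    rw [← hMtM] at *
    rw [A, hev.add_one.neg_one_pow]
    ring
  have hB : F (-M - 1) = F (M + 1) := by
    rw [← hMtM] at *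
    rw [B, hev.neg_one_pow]
    push_cast
    ring
  have e1 : M + 1 + (-1) + 1 = M + 1 := by ring
  have e2 : M + 1 + (-1) = M := by ring
  have e3 : (1 : ℤ) + (-1) + 1 = 1 := by ring
  have e4 : (1 : ℤ) + (-1) = 0 := by ring
  have e5 : 2 * M + 2 + (-(2 * M + 3)) + 1 = 0 := by ring
  have e6 : 2 * M + 2 + (-(2 * M + 3)) = -1 := by ring
  have e7 : M + 2 + (-(2 * M + 3)) + 1 = -M := by ring
  have e8 : M + 2 + (-(2 * M + 3)) = -M - 1 := by ring
  rw [e1, e2, e3, e4, e5, e6, e7, e8, h0, h1]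
  have hFm1 : F (-1) = 1 := by
    have := hrec (-1)
    norm_num at this
    rw [h0] at this
    linarith [h1.symm]
  have hrM := hrec M
  rw [hFm1, hA, hB]
  linarith
end

section
/- For even M and real s, the sum of squares of all elements of H^N(s) except the two end points equals the square of the sum of those same elements: ∑_{i=2}^{N−1} (H_i^N(s))² = (∑_{i=2}^{N−1} H_i^N(s))². Equivalently, the interior elements of H^N(s) form a Pythagorean n-tuple. -/
theorem huffman_sum_of_squares_eq_square_of_sum (s : ℝ) (F : ℤ → ℝ)
    (h0 : F 0 = 0) (h1 : F 1 = 1)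
    (hrec : ∀ n : ℤ, F (n + 2) = s * F (n + 1) + F n)
    (M : ℤ) (hM2 : 2 ≤ M) (hMeven : Even M)
    (H : ℤ → ℝ)
    (hH : ∀ i : ℤ, H i =
      if i = 1 then 1
      else if 2 ≤ i ∧ i ≤ M + 1 then 2 * s * F (i - 1)
      else if i = M + 2 then s * F (M + 1) - 2 * F M
      else if M + 3 ≤ i ∧ i ≤ 2 * M + 2 then 2 * s * F (i - (2 * M + 3))
      else if i = 2 * M + 3 then -1
      else 0) :
    ∑ i ∈ Finset.Icc (2 : ℤ) (2 * M + 2), (H i) ^ 2 =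
      (∑ i ∈ Finset.Icc (2 : ℤ) (2 * M + 2), H i) ^ 2 := by
  -- negative-index formula
  have hneg : ∀ n : ℕ, F (-(n : ℤ)) = (-1 : ℝ) ^ (n + 1) * F n := by
    intro n
    induction n using Nat.strong_induction_on with
    | _ n ih =>
      match n with
      | 0 => simp [h0]
      | 1 =>
        have := hrec (-1)
        norm_num [h0] at this
        simpa using this.symm
      | (k+2) =>
        have hk := ih k (by omega)
        have hk1 := ih (k+1) (by omega)
        have hr := hrec (-(k:ℤ) - 2)
        have hr2 := hrec (k : ℤ)
        have e1 : (-(k:ℤ) - 2 + 2) = -(k:ℤ) := by ring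
        have e2 : (-(k:ℤ) - 2 + 1) = -((k:ℤ)+1) := by ring
        rw [e1, e2] at hr
        push_cast at hk1 ⊢
        rw [hk, hk1] at hr
        push_cast at hr2
        have e3 : F (-((k:ℤ)+2)) = F (-(k:ℤ) - 2) := by ring_nf
        rw [e3]
        have e4 : F (-(k:ℤ) - 2) = (-1:ℝ)^(k+1) * F k - s * ((-1:ℝ)^(k+1+1) * F ((k:ℤ)+1)) := by
          linarith [hr]
        rw [e4, hr2]
        ring
  -- squares at negative indices
  have hnegsq : ∀ i : ℤ, 0 ≤ i → F (-i) ^ 2 = F i ^ 2 := by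
    intro i hi
    lift i to ℕ using hi
    rw [hneg, mul_pow, ← pow_mul, mul_comm (i + 1) 2, pow_mul]
    norm_num
  -- sum of squares identity: s * ∑_{i=1}^n F i ^ 2 = F n * F (n+1)
  have keyA : ∀ n : ℕ, s * ∑ i ∈ Finset.Icc (1 : ℤ) (n : ℤ), F i ^ 2 = F n * F (n + 1) := by
    intro n
    induction n with
    | zero => simp [h0]
    | succ n ihn =>
      have h' : Finset.Icc (1 : ℤ) ((n + 1 : ℕ) : ℤ) =
          insert ((n : ℤ) + 1) (Finset.Icc (1 : ℤ) (n : ℤ)) := by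
        ext x
        simp only [Finset.mem_Icc, Finset.mem_insert]
        push_cast
        omega
      rw [h', Finset.sum_insert (by simp)]
      have hr := hrec (n : ℤ)
      push_cast
      rw [mul_add, ihn, show ((n : ℤ) + 1 + 1) = (n : ℤ) + 2 by ring, hr]
      ring
  -- paired sum identity for even upper bound: s * ∑ (F i + F (-i)) = 2 F (2k)
  have keyB : ∀ k : ℕ, s * ∑ i ∈ Finset.Icc (1 : ℤ) ((2 * k : ℕ) : ℤ), (F i + F (-i)) =
      2 * F ((2 * k : ℕ) : ℤ) := by
    intro k
    induction k with
    | zero => simp [h0]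
    | succ k ihk =>
      have e1 : Finset.Icc (1 : ℤ) ((2 * (k + 1) : ℕ) : ℤ) =
          insert ((2 * k : ℕ) + 2 : ℤ) (insert ((2 * k : ℕ) + 1 : ℤ)
            (Finset.Icc (1 : ℤ) ((2 * k : ℕ) : ℤ))) := by
        ext x
        simp only [Finset.mem_Icc, Finset.mem_insert]
        push_cast
        omega
      rw [e1, Finset.sum_insert (by simp only [Finset.mem_insert, Finset.mem_Icc]; push_cast; omega),
        Finset.sum_insert (by simp only [Finset.mem_Icc]; push_cast; omega)]
      have c1 : (-((2 * k + 1 : ℕ) : ℤ)) = -((2 * k : ℕ) + 1 : ℤ) := by push_cast; ring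
      have c1' : ((2 * k + 1 : ℕ) : ℤ) = ((2 * k : ℕ) : ℤ) + 1 := by push_cast; ring
      have c2 : (-((2 * k + 2 : ℕ) : ℤ)) = -((2 * k : ℕ) + 2 : ℤ) := by push_cast; ring
      have c2' : ((2 * k + 2 : ℕ) : ℤ) = ((2 * k : ℕ) : ℤ) + 2 := by push_cast; ring
      have hodd : F (-((2 * k : ℕ) + 1 : ℤ)) = F ((2 * k : ℕ) + 1 : ℤ) := by
        have h' := hneg (2 * k + 1)
        rw [c1, c1'] at h'
        rw [h', Even.neg_one_pow ⟨k+1, by ring⟩, one_mul]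
      have heven : F (-((2 * k : ℕ) + 2 : ℤ)) = - F ((2 * k : ℕ) + 2 : ℤ) := by
        have h' := hneg (2 * k + 2)
        rw [c2, c2'] at h'
        rw [h', Odd.neg_one_pow ⟨k+1, by ring⟩, neg_one_mul]
      rw [hodd, heven]
      have hr := hrec ((2 * k : ℕ) : ℤ)
      have c3 : ((2 * (k + 1) : ℕ) : ℤ) = ((2 * k : ℕ) : ℤ) + 2 := by push_cast; ring
      rw [c3, hr]
      linear_combination ihk
  -- values of H on the pieces
  have hH1 : ∀ i ∈ Finset.Icc (1 : ℤ) M, H (i + 1) = 2 * s * F i := by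
    intro i hi
    simp only [Finset.mem_Icc] at hi
    rw [hH, if_neg (by omega), if_pos (by omega)]
    ring_nf
  have hH2 : H (M + 2) = s * F (M + 1) - 2 * F M := by
    rw [hH, if_neg (by omega), if_neg (by omega), if_pos rfl]
  have hH3 : ∀ i ∈ Finset.Icc (1 : ℤ) M, H (2 * M + 3 - i) = 2 * s * F (-i) := by
    intro i hi
    simp only [Finset.mem_Icc] at hi
    rw [hH, if_neg (by omega), if_neg (by omega), if_neg (by omega), if_pos (by omega)]
    ring_nf
  -- split the interval
  have hsplit : ∀ f : ℤ → ℝ, ∑ i ∈ Finset.Icc (2 : ℤ) (2 * M + 2), f i =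
      (∑ i ∈ Finset.Icc (1 : ℤ) M, f (i + 1)) + f (M + 2) +
        ∑ i ∈ Finset.Icc (1 : ℤ) M, f (2 * M + 3 - i) := by
    intro f
    have hu : Finset.Icc (2 : ℤ) (2 * M + 2) =
        (Finset.Icc 2 (M + 1) ∪ {M + 2}) ∪ Finset.Icc (M + 3) (2 * M + 2) := by
      ext x; simp; omega
    have hd1 : Disjoint (Finset.Icc (2:ℤ) (M + 1)) ({M + 2} : Finset ℤ) := by
      rw [Finset.disjoint_left]; intro x hx hx'
      simp only [Finset.mem_Icc] at hx; simp only [Finset.mem_singleton] at hx'; omega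
    have hd2 : Disjoint (Finset.Icc (2:ℤ) (M + 1) ∪ {M + 2})
        (Finset.Icc (M + 3) (2 * M + 2)) := by
      rw [Finset.disjoint_left]; intro x hx hx'
      simp only [Finset.mem_union, Finset.mem_Icc, Finset.mem_singleton] at hx
      simp only [Finset.mem_Icc] at hx'; omega
    rw [hu, Finset.sum_union hd2, Finset.sum_union hd1, Finset.sum_singleton]
    have p1 : ∑ i ∈ Finset.Icc (2 : ℤ) (M + 1), f i =
        ∑ i ∈ Finset.Icc (1 : ℤ) M, f (i + 1) := by
      rw [show Finset.Icc (2 : ℤ) (M + 1) = (Finset.Icc (1 : ℤ) M).map (addRightEmbedding 1) by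
        rw [Finset.map_add_right_Icc]; norm_num, Finset.sum_map]
      rfl
    have p2 : ∑ i ∈ Finset.Icc (M + 3) (2 * M + 2), f i =
        ∑ i ∈ Finset.Icc (1 : ℤ) M, f (2 * M + 3 - i) := by
      rw [show Finset.Icc (M + 3) (2 * M + 2) =
          (Finset.Icc (1 : ℤ) M).map ⟨fun i => 2 * M + 3 - i, fun a b h => by dsimp at h; omega⟩ by
        ext x
        simp only [Finset.mem_map, Finset.mem_Icc, Function.Embedding.coeFn_mk]
        constructor
        · intro hx; exact ⟨2 * M + 3 - x, by omega, by show 2 * M + 3 - (2 * M + 3 - x) = x; omega⟩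
        · rintro ⟨a, ha, rfl⟩; show M + 3 ≤ 2 * M + 3 - a ∧ 2 * M + 3 - a ≤ 2 * M + 2; omega, Finset.sum_map]
      rfl
    rw [p1, p2]
  -- naturals
  obtain ⟨m, hm⟩ : ∃ m : ℕ, M = (m : ℤ) := ⟨M.toNat, by omega⟩
  obtain ⟨k, hk⟩ : ∃ k : ℕ, m = 2 * k := by
    rcases hMeven with ⟨t, ht⟩
    exact ⟨t.toNat, by omega⟩
  -- abbreviations
  set a := ∑ i ∈ Finset.Icc (1 : ℤ) M, F i ^ 2 with ha_def
  set t := ∑ i ∈ Finset.Icc (1 : ℤ) M, (F i + F (-i)) with ht_def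
  have ha : s * a = F M * F (M + 1) := by
    rw [ha_def, hm]; exact_mod_cast keyA m
  have ht : s * t = 2 * F M := by
    rw [ht_def, hm, hk]; exact_mod_cast keyB k
  -- rewrite sums of H-values
  rw [hsplit (fun i => H i ^ 2), hsplit H]
  have c1 : ∑ i ∈ Finset.Icc (1 : ℤ) M, H (i + 1) ^ 2 =
      ∑ i ∈ Finset.Icc (1 : ℤ) M, (2 * s * F i) ^ 2 :=
    Finset.sum_congr rfl fun i hi => by rw [hH1 i hi]
  have c2 : ∑ i ∈ Finset.Icc (1 : ℤ) M, H (2 * M + 3 - i) ^ 2 =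
      ∑ i ∈ Finset.Icc (1 : ℤ) M, (2 * s * F (-i)) ^ 2 :=
    Finset.sum_congr rfl fun i hi => by rw [hH3 i hi]
  have c3 : ∑ i ∈ Finset.Icc (1 : ℤ) M, H (i + 1) =
      ∑ i ∈ Finset.Icc (1 : ℤ) M, 2 * s * F i :=
    Finset.sum_congr rfl fun i hi => hH1 i hi
  have c4 : ∑ i ∈ Finset.Icc (1 : ℤ) M, H (2 * M + 3 - i) =
      ∑ i ∈ Finset.Icc (1 : ℤ) M, 2 * s * F (-i) :=
    Finset.sum_congr rfl fun i hi => hH3 i hi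
  have e1 : ∑ i ∈ Finset.Icc (1 : ℤ) M, H (i + 1) ^ 2 = 4 * s ^ 2 * a := by
    rw [c1, ha_def, Finset.mul_sum]
    exact Finset.sum_congr rfl fun i hi => by ring
  have e2 : ∑ i ∈ Finset.Icc (1 : ℤ) M, H (2 * M + 3 - i) ^ 2 = 4 * s ^ 2 * a := by
    rw [c2, ha_def, Finset.mul_sum]
    refine Finset.sum_congr rfl fun i hi => ?_
    simp only [Finset.mem_Icc] at hi
    rw [mul_pow, mul_pow, hnegsq i (by omega)]
    ring
  have e3 : (∑ i ∈ Finset.Icc (1 : ℤ) M, H (i + 1)) +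
      (∑ i ∈ Finset.Icc (1 : ℤ) M, H (2 * M + 3 - i)) = 2 * s * t := by
    rw [c3, c4, ht_def, Finset.mul_sum, ← Finset.sum_add_distrib]
    exact Finset.sum_congr rfl fun i hi => by ring
  have e3' : ∑ i ∈ Finset.Icc (1 : ℤ) M, H (2 * M + 3 - i) =
      2 * s * t - ∑ i ∈ Finset.Icc (1 : ℤ) M, H (i + 1) := by linarith
  rw [e1, e2, hH2, e3']
  linear_combination 8 * s * ha + (-4 * s * t - 4 * s * F (M + 1)) * ht
end

section
/- For even M ≥ 2 and real s ≠ 0, the auto-correlation peak of the Huffman sequence H^N(s) satisfies A_0(s) = ∑_{i=1}^{N} (H_i^N(s))² = 2 + s²·F_{M+1}(s)² + 4·F_M(s)·F_{M+2}(s), where N = 2M+3. -/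
theorem huffman_autocorrelation_peak (s : ℝ) (hs : s ≠ 0) (F : ℤ → ℝ)
    (h0 : F 0 = 0) (h1 : F 1 = 1)
    (hrec : ∀ n : ℤ, F (n + 2) = s * F (n + 1) + F n)
    (M : ℤ) (hM2 : 2 ≤ M) (hMeven : Even M)
    (H : ℤ → ℝ)
    (hH : ∀ i : ℤ, H i =
      if i = 1 then 1
      else if 2 ≤ i ∧ i ≤ M + 1 then 2 * s * F (i - 1)
      else if i = M + 2 then s * F (M + 1) - 2 * F M
      else if M + 3 ≤ i ∧ i ≤ 2 * M + 2 then 2 * s * F (i - (2 * M + 3))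
      else if i = 2 * M + 3 then -1
      else 0) :
    ∑ i ∈ Finset.Icc (1 : ℤ) (2 * M + 3), (H i) ^ 2 =
      2 + s ^ 2 * (F (M + 1)) ^ 2 + 4 * F M * F (M + 2) := by
  -- negative index lemma
  have hneg : ∀ n : ℕ, F (-(n:ℤ)) = (-1)^(n+1) * F n ∧ F (-(n:ℤ)-1) = (-1)^n * F ((n:ℤ)+1) := by
    intro n
    induction n with
    | zero =>
      constructor
      · simpa using h0.trans (by rw [h0]; ring)
      · have := hrec (-1)
        norm_num at this ⊢
        rw [h0] at this
        linarith [this, h1.symm]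
    | succ n ih =>
      obtain ⟨ih1, ih2⟩ := ih
      constructor
      · rw [show (-(((n:ℕ)+1:ℕ)):ℤ) = -(n:ℤ)-1 by push_cast; ring, ih2]
        push_cast
        rw [pow_succ, pow_succ]
        ring
      · have hr := hrec (-(n:ℤ)-2)
        have e1 : (-(n:ℤ)-2) + 2 = -(n:ℤ) := by ring
        have e2 : (-(n:ℤ)-2) + 1 = -(n:ℤ)-1 := by ring
        rw [e1, e2] at hr
        have hr2 := hrec (n:ℤ)
        have : F (-(n:ℤ)-2) = F (-(n:ℤ)) - s * F (-(n:ℤ)-1) := by linarith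
        rw [show (-(((n:ℕ)+1:ℕ)):ℤ)-1 = -(n:ℤ)-2 by push_cast; ring, this, ih1, ih2,
          show ((((n:ℕ)+1:ℕ)):ℤ)+1 = (n:ℤ)+2 by push_cast; ring, hr2]
        rw [pow_succ]
        ring
  have hsq : ∀ n : ℕ, F (-(n:ℤ)) ^ 2 = F (n:ℤ) ^ 2 := by
    intro n
    rw [(hneg n).1, mul_pow]
    rcases Nat.even_or_odd (n+1) with h | h
    · rw [h.neg_one_pow]; ring
    · rw [h.neg_one_pow]; ring
  -- telescoping
  have hsing : ∀ a : ℤ, Finset.Ioc a (a+1) = {a+1} := by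
    intro a; ext x; simp [Finset.mem_Ioc]; omega
  have hsplit : ∀ (a b c : ℤ) (f : ℤ → ℝ), a ≤ b → b ≤ c →
      ∑ i ∈ Finset.Ioc a c, f i = ∑ i ∈ Finset.Ioc a b, f i + ∑ i ∈ Finset.Ioc b c, f i := by
    intro a b c f hab hbc
    rw [← Finset.Ioc_union_Ioc_eq_Ioc hab hbc, Finset.sum_union]
    rw [Finset.disjoint_left]
    intro x hx hx'
    simp only [Finset.mem_Ioc] at hx hx'
    omega
  have hT : ∀ n : ℕ, s * ∑ k ∈ Finset.Ioc (0:ℤ) (n:ℤ), F k ^ 2 = F (n:ℤ) * F ((n:ℤ)+1) := by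
    intro n
    induction n with
    | zero => simp [h0]
    | succ n ih =>
      rw [show (((n:ℕ)+1:ℕ):ℤ) = (n:ℤ)+1 by push_cast; ring,
        hsplit 0 (n:ℤ) ((n:ℤ)+1) _ (by omega) (by omega),
        hsing, Finset.sum_singleton]
      have hr := hrec (n:ℤ)
      rw [show (n:ℤ)+1+1 = (n:ℤ)+2 by ring, hr]
      nlinarith [ih]
  obtain ⟨m, rfl⟩ : ∃ m : ℕ, M = (m:ℤ) := ⟨M.toNat, by omega⟩
  set M := (m:ℤ) with hMdef
  have hsT : s * ∑ k ∈ Finset.Ioc (0:ℤ) M, F k ^ 2 = F M * F (M+1) := hT m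
  -- decompose
  have hdec : ∑ i ∈ Finset.Icc (1 : ℤ) (2 * M + 3), (H i) ^ 2 =
      H 1 ^ 2 + (∑ i ∈ Finset.Ioc (1:ℤ) (M+1), H i ^ 2) + H (M+2) ^ 2
        + (∑ i ∈ Finset.Ioc (M+2) (2*M+2), H i ^ 2) + H (2*M+3) ^ 2 := by
    rw [show Finset.Icc (1:ℤ) (2*M+3) = Finset.Ioc 0 (2*M+3) by
      ext x; simp [Finset.mem_Ioc]; omega]
    rw [hsplit 0 1 (2*M+3) _ (by omega) (by omega),
      hsplit 1 (M+1) (2*M+3) _ (by omega) (by omega),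
      hsplit (M+1) (M+2) (2*M+3) _ (by omega) (by omega),
      hsplit (M+2) (2*M+2) (2*M+3) _ (by omega) (by omega)]
    rw [show Finset.Ioc (0:ℤ) 1 = {1} by ext x; simp only [Finset.mem_Ioc, Finset.mem_singleton]; omega,
      show Finset.Ioc (M+1) (M+2) = {M+2} by ext x; simp only [Finset.mem_Ioc, Finset.mem_singleton]; omega,
      show Finset.Ioc (2*M+2) (2*M+3) = {2*M+3} by ext x; simp only [Finset.mem_Ioc, Finset.mem_singleton]; omega]
    simp only [Finset.sum_singleton]
    ring
  rw [hdec]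
  -- evaluate H at special points
  have hH1 : H 1 = 1 := by rw [hH]; simp
  have hHM2 : H (M+2) = s * F (M+1) - 2 * F M := by
    rw [hH]; split_ifs <;> first | rfl | omega
  have hHend : H (2*M+3) = -1 := by
    rw [hH]; split_ifs <;> first | rfl | omega
  -- block 1
  have hb1 : (∑ i ∈ Finset.Ioc (1:ℤ) (M+1), H i ^ 2)
      = 4 * s^2 * ∑ k ∈ Finset.Ioc (0:ℤ) M, F k ^ 2 := by
    rw [Finset.mul_sum]
    refine Finset.sum_nbij' (fun i => i - 1) (fun k => k + 1) ?_ ?_ ?_ ?_ ?_ <;>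
      intro a ha <;> simp [Finset.mem_Ioc] at ha ⊢
    · omega
    · omega
    · rw [hH]
      split_ifs with h' h'' <;> try omega
      ring
  -- block 2
  have hb2 : (∑ i ∈ Finset.Ioc (M+2) (2*M+2), H i ^ 2)
      = 4 * s^2 * ∑ k ∈ Finset.Ioc (0:ℤ) M, F k ^ 2 := by
    have step1 : (∑ i ∈ Finset.Ioc (M+2) (2*M+2), H i ^ 2)
        = ∑ k ∈ Finset.Ioc (0:ℤ) M, (2 * s * F (-k)) ^ 2 := by
      refine Finset.sum_nbij' (fun i => 2*M+3 - i) (fun k => 2*M+3 - k) ?_ ?_ ?_ ?_ ?_ <;>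
        intro a ha <;> simp [Finset.mem_Ioc] at ha ⊢
      · omega
      · omega
      · rw [hH]
        split_ifs with h' h'' h''' h'''' <;> try omega
        rw [show a - (2*M+3) = -(2*M+3-a) by ring]
    rw [step1, Finset.mul_sum]
    apply Finset.sum_congr rfl
    intro k hk
    simp [Finset.mem_Ioc] at hk
    lift k to ℕ using (by omega : (0:ℤ) ≤ k)
    rw [mul_pow, mul_pow, hsq k]
    ring
  rw [hb1, hb2, hH1, hHM2, hHend]
  have hr := hrec M
  rw [hr]
  linear_combination 8 * s * hsT
end

section
/- For even M ≥ 2, even shift d with 0 < d < M, writing r = d/2, the auto-correlation element A_d(s) of H^N(s) can be written in closed form as A_d(s) = 8s²·[F_{2r}(s)/(2s) + (s·F_{M+1}(s) − 2F_M(s))·F_{M−2r+1}(s)/(2s) − F_{M−r+1}(s)²/2 + F_{M−r}(s)·F_{M−r+1}(s)/s − F_r(s)²], and this expression equals zero for all real s ≠ 0. -/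
namespace HuffmanAux

open Finset

lemma int_induction_pair {P : ℤ → Prop} (h0 : P 0) (h1 : P 1)
    (hup : ∀ n : ℤ, P n → P (n+1) → P (n+2))
    (hdown : ∀ n : ℤ, P n → P (n+1) → P (n-1)) : ∀ n, P n := by
  have key : ∀ m : ℤ, P m ∧ P (m+1) := by
    intro m
    induction m using Int.induction_on with
    | zero => exact ⟨h0, by norm_num [h1]⟩
    | succ i ih =>
      refine ⟨ih.2, ?_⟩
      have h := hup i ih.1 ih.2
      rw [show ((i:ℤ)+2) = (i:ℤ)+1+1 by ring] at h
      exact h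
    | pred i ih =>
      refine ⟨?_, ?_⟩
      · have h := hdown (-(i:ℤ)) ih.1 ih.2
        rw [show (-(i:ℤ)-1) = -(i:ℤ)-1 by ring] at h
        exact h
      · have h := ih.1
        rw [show (-(i:ℤ)) = -(i:ℤ)-1+1 by ring] at h
        exact h
  exact fun n => (key n).1

lemma sumsplit (a b c : ℤ) (f : ℤ → ℝ) (h1 : a ≤ b) (h2 : b ≤ c) :
    ∑ i ∈ Finset.Ioc a c, f i = (∑ i ∈ Finset.Ioc a b, f i) + ∑ i ∈ Finset.Ioc b c, f i := by
  rw [← Finset.Ioc_union_Ioc_eq_Ioc h1 h2, Finset.sum_union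
    (by rw [Finset.disjoint_left]; intro x hx hy; simp [Finset.mem_Ioc] at hx hy; omega)]

lemma sum_top (a b : ℤ) (h : a ≤ b + 1) (f : ℤ → ℝ) :
    ∑ i ∈ Finset.Icc a (b+1), f i = (∑ i ∈ Finset.Icc a b, f i) + f (b+1) := by
  rw [show Finset.Icc a (b+1) = insert (b+1) (Finset.Icc a b) by ext x; simp; omega,
    Finset.sum_insert (by simp)]
  ring

lemma eps_add_one (n : ℤ) : (-1 : ℝ) ^ (n + 1) = -(-1 : ℝ) ^ n := by
  rw [zpow_add_one₀ (by norm_num : (-1:ℝ) ≠ 0)]; ring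

lemma eps_even (k : ℤ) : (-1 : ℝ) ^ (2 * k) = 1 := by rw [zpow_mul]; norm_num

lemma eps_odd (k : ℤ) : (-1 : ℝ) ^ (2 * k + 1) = -1 := by rw [eps_add_one, eps_even]

lemma eps_mul (m n : ℤ) : (-1:ℝ)^m * (-1:ℝ)^n = (-1:ℝ)^(m+n) := (zpow_add₀ (by norm_num) m n).symm

lemma eps_sq (n : ℤ) : (-1:ℝ)^n * (-1:ℝ)^n = 1 := by
  rw [eps_mul, show (n + n : ℤ) = 2 * n by ring, eps_even]

lemma eps_neg (n : ℤ) : (-1:ℝ)^(-n) = (-1:ℝ)^n := by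
  rw [zpow_neg]
  exact inv_eq_of_mul_eq_one_left (eps_sq n)

/-- Lucas companion -/
noncomputable def L (F : ℤ → ℝ) (n : ℤ) : ℝ := F (n + 1) + F (n - 1)

variable {s : ℝ} {F : ℤ → ℝ}

section Rec

variable (hrec : ∀ n : ℤ, F (n + 2) = s * F (n + 1) + F n)

include hrec

lemma recU (n : ℤ) : F (n + 1) = s * F n + F (n - 1) := by
  have h := hrec (n - 1)
  rw [show (n - 1 + 2 : ℤ) = n + 1 by ring, show (n - 1 + 1 : ℤ) = n by ring] at h
  exact h

lemma recD (n : ℤ) : F (n - 1) = F (n + 1) - s * F n := by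
  have := recU hrec n; linarith

lemma Lrec (n : ℤ) : L F (n + 2) = s * L F (n + 1) + L F n := by
  unfold L
  have h1 := hrec (n + 1)
  have h2 := hrec (n - 1)
  rw [show (n - 1 + 2 : ℤ) = n + 1 by ring, show (n - 1 + 1 : ℤ) = n by ring] at h2
  rw [show (n + 1 + 2 : ℤ) = n + 2 + 1 by ring] at h1
  rw [show (n + 2 - 1 : ℤ) = n + 1 by ring, show (n + 1 - 1 : ℤ) = n by ring]
  linarith

lemma LrecU (n : ℤ) : L F (n + 1) = s * L F n + L F (n - 1) := by
  have h := Lrec hrec (n - 1)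
  rw [show (n - 1 + 2 : ℤ) = n + 1 by ring, show (n - 1 + 1 : ℤ) = n by ring] at h
  exact h

lemma LrecD (n : ℤ) : L F (n - 1) = L F (n + 1) - s * L F n := by
  have := LrecU hrec n; linarith

lemma Fneg (h0 : F 0 = 0) : ∀ n : ℤ, F (-n) = -(-1:ℝ)^n * F n := by
  apply int_induction_pair
  · norm_num [h0]
  · have h := hrec (-1)
    norm_num at h
    rw [show ((-1:ℤ)) = -(1:ℤ) by ring]
    rw [h, h0]
    norm_num
  · intro n p1 p2
    have h := hrec (-n-2)
    rw [show (-n-2+2 : ℤ) = -n by ring, show (-n-2+1 : ℤ) = -(n+1) by ring,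
      show (-n-2 : ℤ) = -(n+1+1) by ring] at h
    have h2 := hrec n
    rw [show (n+2 : ℤ) = n+1+1 by ring] at h2 ⊢
    rw [eps_add_one (n+1), eps_add_one n] at *
    linear_combination -h + p1 - s*p2 + ((-1:ℝ)^n)*h2
  · intro n p1 p2
    have h := hrec (-n-1)
    rw [show (-n-1+2 : ℤ) = -(n-1) by ring, show (-n-1+1 : ℤ) = -n by ring,
      show (-n-1 : ℤ) = -(n+1) by ring] at h
    have h2 := recD hrec n
    have he : (-1:ℝ)^(n-1) = -(-1:ℝ)^n := by
      have := eps_add_one (n-1); rw [show (n-1+1:ℤ) = n by ring] at this; linarith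
    rw [eps_add_one n] at p2
    rw [he]
    linear_combination h + s*p1 + p2 - ((-1:ℝ)^n) * h2

lemma prod_formula (h0 : F 0 = 0) (h1 : F 1 = 1) :
    ∀ n m : ℤ, (s^2+4) * (F m * F n) = L F (m+n) - (-1:ℝ)^n * L F (m-n) := by
  apply int_induction_pair (P := fun n => ∀ m : ℤ, (s^2+4) * (F m * F n) = L F (m+n) - (-1:ℝ)^n * L F (m-n))
  · intro m; norm_num [h0]
  · intro m
    rw [h1]
    unfold L
    have ha := hrec m
    have hb := recU hrec m
    have hc := recD hrec (m-1)
    rw [show (m-1-1 : ℤ) = m - 2 by ring, show (m-1+1 : ℤ) = m by ring] at hc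
    rw [show (m+1+1 : ℤ) = m+2 by ring, show (m+1-1 : ℤ) = m by ring,
      show (m-1-1 : ℤ) = m-2 by ring, show (m-1+1:ℤ) = m by ring, zpow_one]
    linear_combination (-1:ℝ)*ha - s*hb - hc
  · intro n p1 p2 m
    have ha := hrec n
    have hL1 := Lrec hrec (m+n)
    have hL2 := LrecD hrec (m-n-1)
    rw [show (m-n-1-1 : ℤ) = m-(n+2) by ring, show (m-n-1+1 : ℤ) = m-n by ring] at hL2
    have q1 := p1 m
    have q2 := p2 m
    rw [show (m+(n+1) : ℤ) = m+n+1 by ring, show (m-(n+1):ℤ) = m-n-1 by ring,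
      eps_add_one n] at q2
    have he : (-1:ℝ)^(n+2) = (-1:ℝ)^n := by
      rw [show (n+2:ℤ) = (n+1)+1 by ring, eps_add_one, eps_add_one]; ring
    rw [show (m+(n+2):ℤ) = m+n+2 by ring, he]
    linear_combination (s^2+4)*F m*ha + s*q2 + q1 - hL1 + ((-1:ℝ)^n)*hL2
  · intro n p1 p2 m
    have ha := recD hrec n
    have hL1 := LrecD hrec (m+n)
    have hL2 := LrecU hrec (m-n)
    rw [show (m-n+1 : ℤ) = m-(n-1) by ring, show (m-n-1 : ℤ) = m-(n+1) by ring] at hL2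
    have q1 := p1 m
    have q2 := p2 m
    rw [show (m+(n+1) : ℤ) = m+n+1 by ring, eps_add_one n] at q2
    have he : (-1:ℝ)^(n-1) = -(-1:ℝ)^n := by
      have := eps_add_one (n-1); rw [show (n-1+1:ℤ) = n by ring] at this; linarith
    rw [show (m+(n-1):ℤ) = m+n-1 by ring, he]
    linear_combination q2 - s*q1 - hL1 - ((-1:ℝ)^n)*hL2 + (s^2+4)*F m*ha
lemma Fneg_odd (h0 : F 0 = 0) (k : ℤ) : F (-(2*k+1)) = F (2*k+1) := by
  rw [Fneg hrec h0 (2*k+1), eps_odd]; ring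

lemma Fneg_even (h0 : F 0 = 0) (k : ℤ) : F (-(2*k)) = -F (2*k) := by
  rw [Fneg hrec h0 (2*k), eps_even]; ring

lemma Lneg_even (h0 : F 0 = 0) (k : ℤ) : L F (-(2*k)) = L F (2*k) := by
  unfold L
  have a1 : (-(2*k)+1 : ℤ) = -(2*(k-1)+1) := by ring
  have a2 : (-(2*k)-1 : ℤ) = -(2*k+1) := by ring
  rw [a1, a2, Fneg_odd hrec h0 (k-1), Fneg_odd hrec h0 k,
    show (2*(k-1)+1 : ℤ) = 2*k-1 by ring]
  ring

lemma sum1 (h0 : F 0 = 0) (t : ℤ) :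
    ∀ m : ℤ, 0 ≤ m → s * (∑ k ∈ Finset.Icc (1:ℤ) (2*m), F k * F (k + t))
      = F (2*m) * F (2*m + t + 1) := by
  refine Int.le_induction ?_ ?_
  · rw [show (2*(0:ℤ)) = 0 by ring, Finset.Icc_eq_empty (by omega)]
    simp [h0]
  · intro n hn ih
    rw [show (2*(n+1):ℤ) = (2*n+1)+1 by ring, sum_top _ _ (by omega),
      show (2*n+1:ℤ) = (2*n)+1 by ring, sum_top _ _ (by omega)]
    have ha := hrec (2*n+t+1)
    rw [show (2*n+t+1+2 : ℤ) = 2*n+1+1+t+1 by ring, show (2*n+t+1+1 : ℤ) = 2*n+1+1+t by ring] at ha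
    have hb := hrec (2*n)
    rw [show (2*n+2 : ℤ) = 2*n+1+1 by ring] at hb
    rw [show (2*n+1+t : ℤ) = 2*n+t+1 by ring]
    linear_combination ih - F (2*n+1+1) * ha - F (2*n+t+1) * hb

omit hrec in
lemma sumEpsAux : ∀ r : ℤ, 1 ≤ r → (∑ j ∈ Finset.Icc (1:ℤ) (2*r-1), (-1:ℝ)^j) = -1 := by
  refine Int.le_induction ?_ ?_
  · rw [show (2*(1:ℤ)-1) = 1 by ring, Finset.Icc_self, Finset.sum_singleton, zpow_one]
  · intro n hn ih
    rw [show (2*(n+1)-1:ℤ) = (2*n)+1 by ring, sum_top _ _ (by omega),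
      show (2*n:ℤ) = (2*n-1)+1 by ring, sum_top _ _ (by omega),
      show (2*n-1+1:ℤ) = 2*n by ring, show (2*n+1:ℤ) = 2*n+1 by ring,
      eps_even n, eps_odd n, ih]
    ring

lemma sumL (h0 : F 0 = 0) :
    ∀ r : ℤ, 1 ≤ r → s * (∑ j ∈ Finset.Icc (1:ℤ) (2*r-1), L F (2*j - 2*r))
      = s * L F 0 + 2*(L F (2*r-1) - L F 1) := by
  refine Int.le_induction ?_ ?_
  · rw [show (2*(1:ℤ)-1) = 1 by ring, Finset.Icc_self, Finset.sum_singleton,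
      show (2*(1:ℤ)-2*1) = 0 by ring]
    ring
  · intro n hn ih
    have shift : (∑ j ∈ Finset.Icc (1:ℤ) (2*n+1), L F (2*j - 2*(n+1)))
        = ∑ j ∈ Finset.Icc (0:ℤ) (2*n), L F (2*j - 2*n) := by
      apply Finset.sum_nbij' (fun i => i - 1) (fun j => j + 1)
      · intro a ha2; simp [Finset.mem_Icc] at ha2 ⊢; omega
      · intro a ha2; simp [Finset.mem_Icc] at ha2 ⊢; omega
      · intro a _; ring
      · intro a _; ring
      · intro a _; congr 1; ring
    have t1 := sum_top 0 (2*n-1) (by omega) (fun j => L F (2*j-2*n))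
    rw [show (2*n-1+1:ℤ) = 2*n by ring] at t1
    have t2 : (∑ j ∈ Finset.Icc (0:ℤ) (2*n-1), L F (2*j-2*n))
        = L F (2*0-2*n) + ∑ j ∈ Finset.Icc (1:ℤ) (2*n-1), L F (2*j-2*n) := by
      rw [show Finset.Icc (0:ℤ) (2*n-1) = insert 0 (Finset.Icc (1:ℤ) (2*n-1)) by
          ext x; simp [Finset.mem_Icc]; omega,
        Finset.sum_insert (by simp)]
    have hneg : L F (2*0 - 2*n) = L F (2*n) := by
      rw [show (2*0-2*n : ℤ) = -(2*n) by ring, Lneg_even hrec h0]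
    have htop : L F (2*(2*n)-2*n) = L F (2*n) := by congr 1; ring
    have hLr := LrecU hrec (2*n)
    rw [show (2*(n+1)-1:ℤ) = 2*n+1 by ring, shift, t1, t2, hneg, htop]
    linear_combination ih - 2 * hLr

lemma sumS2 (h0 : F 0 = 0) (h1 : F 1 = 1) (r c a : ℤ) (hr : 1 ≤ r) (hac : a = 2*c+1) :
    s * (s^2+4) * (∑ j ∈ Finset.Icc (1:ℤ) (2*r-1), (-1:ℝ)^j * (F (a+j) * F (a+2*r-j)))
      = -(s * L F (2*a+2*r)) + s * L F 0 + 2*(L F (2*r-1) - L F 1) := by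
  have step1 : ∀ j ∈ Finset.Icc (1:ℤ) (2*r-1),
      (s^2+4) * ((-1:ℝ)^j * (F (a+j) * F (a+2*r-j)))
        = (-1:ℝ)^j * L F (2*a+2*r) + L F (2*j-2*r) := by
    intro j _
    have hp := prod_formula hrec h0 h1 (a+2*r-j) (a+j)
    rw [show (a+j+(a+2*r-j):ℤ) = 2*a+2*r by ring,
      show (a+j-(a+2*r-j):ℤ) = 2*j-2*r by ring] at hp
    have hsg : (-1:ℝ)^j * (-1:ℝ)^(a+2*r-j) = -1 := by
      rw [eps_mul, show (j+(a+2*r-j):ℤ) = 2*(c+r)+1 by rw [hac]; ring, eps_odd]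
    linear_combination ((-1:ℝ)^j) * hp - (L F (2*j-2*r)) * hsg
  have e1 : (s^2+4) * (∑ j ∈ Finset.Icc (1:ℤ) (2*r-1), (-1:ℝ)^j * (F (a+j) * F (a+2*r-j)))
      = (∑ j ∈ Finset.Icc (1:ℤ) (2*r-1), (-1:ℝ)^j) * L F (2*a+2*r)
        + ∑ j ∈ Finset.Icc (1:ℤ) (2*r-1), L F (2*j-2*r) := by
    rw [Finset.mul_sum, Finset.sum_congr rfl step1, Finset.sum_add_distrib, Finset.sum_mul]
  have e2 := sumEpsAux r hr
  have e3 := sumL hrec h0 r hr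
  calc s * (s^2+4) * (∑ j ∈ Finset.Icc (1:ℤ) (2*r-1), (-1:ℝ)^j * (F (a+j) * F (a+2*r-j)))
      = s * ((s^2+4) * ∑ j ∈ Finset.Icc (1:ℤ) (2*r-1), (-1:ℝ)^j * (F (a+j) * F (a+2*r-j))) := by ring
    _ = s * ((∑ j ∈ Finset.Icc (1:ℤ) (2*r-1), (-1:ℝ)^j) * L F (2*a+2*r))
        + s * ∑ j ∈ Finset.Icc (1:ℤ) (2*r-1), L F (2*j-2*r) := by rw [e1]; ring
    _ = -(s * L F (2*a+2*r)) + s * L F 0 + 2*(L F (2*r-1) - L F 1) := by rw [e2, e3]; ring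


end Rec

end HuffmanAux


open HuffmanAux in
theorem huffman_autocorrelation_closed_form (s : ℝ) (hs : s ≠ 0) (F : ℤ → ℝ)
    (h0 : F 0 = 0) (h1 : F 1 = 1)
    (hrec : ∀ n : ℤ, F (n + 2) = s * F (n + 1) + F n)
    (M : ℤ) (hM2 : 2 ≤ M) (hMeven : Even M)
    (H : ℤ → ℝ)
    (hH : ∀ i : ℤ, H i =
      if i = 1 then 1
      else if 2 ≤ i ∧ i ≤ M + 1 then 2 * s * F (i - 1)
      else if i = M + 2 then s * F (M + 1) - 2 * F M
      else if M + 3 ≤ i ∧ i ≤ 2 * M + 2 then 2 * s * F (i - (2 * M + 3))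
      else if i = 2 * M + 3 then -1
      else 0)
    (d r : ℤ) (hd : d = 2 * r) (hd0 : 0 < d) (hdM : d < M) :
    (∑ i ∈ Finset.Icc (1 : ℤ) (2 * M + 3), H i * H (i + d)) =
        8 * s ^ 2 * (F (2 * r) / (2 * s)
          + (s * F (M + 1) - 2 * F M) * F (M - 2 * r + 1) / (2 * s)
          - (F (M - r + 1)) ^ 2 / 2
          + F (M - r) * F (M - r + 1) / s
          - (F r) ^ 2) ∧
      (∑ i ∈ Finset.Icc (1 : ℤ) (2 * M + 3), H i * H (i + d)) = 0 := by
  subst hd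
  obtain ⟨e, he⟩ := hMeven
  have hM : M = 2 * e := by omega
  have hr1 : 1 ≤ r := by omega
  have hrM : 2 * r ≤ M - 2 := by omega
  -- basic values
  have hF2 : F 2 = s := by
    have h := hrec 0
    norm_num [h0, h1] at h
    exact h
  have hFm1 : F (-1) = 1 := by
    have h := recU hrec 0
    norm_num [h0, h1] at h
    linarith
  have hL0v : L F 0 = 2 := by
    unfold L
    norm_num [h1, hFm1]
  have hL1v : L F 1 = s := by
    unfold L
    norm_num [hF2, h0]
  have hLm1v : L F (-1) = -s := by
    unfold L
    rw [show (-1+1 : ℤ) = 0 by ring, show (-1-1 : ℤ) = -(2*1) by ring,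
      Fneg_even hrec h0 1, show (2*1 : ℤ) = 2 by ring, hF2, h0]
    ring
  -- H branch values
  have hH1 : H 1 = 1 := by rw [hH]; simp
  have hHmid : ∀ i : ℤ, 2 ≤ i → i ≤ M + 1 → H i = 2 * s * F (i - 1) := by
    intro i hi1 hi2
    rw [hH, if_neg (by omega), if_pos ⟨hi1, hi2⟩]
  have hHM2 : H (M+2) = s * F (M + 1) - 2 * F M := by
    rw [hH, if_neg (by omega), if_neg (by omega), if_pos rfl]
  have hHneg : ∀ i : ℤ, M + 3 ≤ i → i ≤ 2*M + 2 → H i = 2 * s * F (i - (2*M+3)) := by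
    intro i hi1 hi2
    rw [hH, if_neg (by omega), if_neg (by omega), if_neg (by omega), if_pos ⟨hi1, by omega⟩]
  have hHtop : H (2*M+3) = -1 := by
    rw [hH, if_neg (by omega), if_neg (by omega), if_neg (by omega), if_neg (by omega),
      if_pos rfl]
  have hH0 : ∀ i : ℤ, 2*M + 3 < i → H i = 0 := by
    intro i hi
    rw [hH, if_neg (by omega), if_neg (by omega), if_neg (by omega), if_neg (by omega),
      if_neg (by omega)]
  -- split the sum
  have hsplit : (∑ i ∈ Finset.Icc (1 : ℤ) (2 * M + 3), H i * H (i + 2*r)) =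
      (∑ i ∈ Finset.Ioc (0:ℤ) 1, H i * H (i + 2*r))
      + ((∑ i ∈ Finset.Ioc (1:ℤ) (M+1-2*r), H i * H (i + 2*r))
      + ((∑ i ∈ Finset.Ioc (M+1-2*r) (M+2-2*r), H i * H (i + 2*r))
      + ((∑ i ∈ Finset.Ioc (M+2-2*r) (M+1), H i * H (i + 2*r))
      + ((∑ i ∈ Finset.Ioc (M+1) (M+2), H i * H (i + 2*r))
      + ((∑ i ∈ Finset.Ioc (M+2) (2*M+2-2*r), H i * H (i + 2*r))
      + ((∑ i ∈ Finset.Ioc (2*M+2-2*r) (2*M+3-2*r), H i * H (i + 2*r))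
      + (∑ i ∈ Finset.Ioc (2*M+3-2*r) (2*M+3), H i * H (i + 2*r)))))))) := by
    rw [show Finset.Icc (1:ℤ) (2*M+3) = Finset.Ioc (0:ℤ) (2*M+3) by
        ext x; simp [Finset.mem_Icc, Finset.mem_Ioc]; omega]
    rw [sumsplit 0 1 (2*M+3) (fun i => H i * H (i + 2*r)) (by omega) (by omega),
      sumsplit 1 (M+1-2*r) (2*M+3) (fun i => H i * H (i + 2*r)) (by omega) (by omega),
      sumsplit (M+1-2*r) (M+2-2*r) (2*M+3) (fun i => H i * H (i + 2*r)) (by omega) (by omega),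
      sumsplit (M+2-2*r) (M+1) (2*M+3) (fun i => H i * H (i + 2*r)) (by omega) (by omega),
      sumsplit (M+1) (M+2) (2*M+3) (fun i => H i * H (i + 2*r)) (by omega) (by omega),
      sumsplit (M+2) (2*M+2-2*r) (2*M+3) (fun i => H i * H (i + 2*r)) (by omega) (by omega),
      sumsplit (2*M+2-2*r) (2*M+3-2*r) (2*M+3) (fun i => H i * H (i + 2*r)) (by omega) (by omega)]
  -- piece 1
  have hP1 : (∑ i ∈ Finset.Ioc (0:ℤ) 1, H i * H (i + 2*r)) = 2*s*F (2*r) := by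
    rw [show Finset.Ioc (0:ℤ) 1 = {1} by ext x; simp [Finset.mem_Ioc]; omega,
      Finset.sum_singleton, hH1, hHmid (1+2*r) (by omega) (by omega),
      show (1+2*r-1 : ℤ) = 2*r by ring]
    ring
  -- piece 2
  have hP2 : (∑ i ∈ Finset.Ioc (1:ℤ) (M+1-2*r), H i * H (i + 2*r))
      = 4*s*(F (M-2*r) * F (M+1)) := by
    have e1 : (∑ i ∈ Finset.Ioc (1:ℤ) (M+1-2*r), H i * H (i + 2*r))
        = ∑ k ∈ Finset.Icc (1:ℤ) (M-2*r), 4*s^2*(F k * F (k + 2*r)) := by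
      apply Finset.sum_nbij' (fun i => i - 1) (fun k => k + 1)
      · intro a ha; simp [Finset.mem_Ioc, Finset.mem_Icc] at ha ⊢; omega
      · intro a ha; simp [Finset.mem_Ioc, Finset.mem_Icc] at ha ⊢; omega
      · intro a _; ring
      · intro a _; ring
      · intro i hi
        simp only [Finset.mem_Ioc] at hi
        rw [hHmid i (by omega) (by omega), hHmid (i+2*r) (by omega) (by omega),
          show (i+2*r-1 : ℤ) = i-1+2*r by ring]
        ring
    have e2 : (∑ k ∈ Finset.Icc (1:ℤ) (M-2*r), 4*s^2*(F k * F (k + 2*r)))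
        = 4*s^2 * ∑ k ∈ Finset.Icc (1:ℤ) (M-2*r), F k * F (k + 2*r) := by
      rw [Finset.mul_sum]
    have hs1 := sum1 hrec h0 (2*r) (e-r) (by omega)
    rw [show (2*(e-r) : ℤ) = M-2*r by omega] at hs1
    rw [show (M-2*r+2*r+1 : ℤ) = M+1 by ring] at hs1
    rw [e1, e2]
    linear_combination 4*s*hs1
  -- piece 3
  have hP3 : (∑ i ∈ Finset.Ioc (M+1-2*r) (M+2-2*r), H i * H (i + 2*r))
      = 2*s*F (M-2*r+1) * (s * F (M + 1) - 2 * F M) := by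
    rw [show Finset.Ioc (M+1-2*r) (M+2-2*r) = {M+2-2*r} by ext x; simp [Finset.mem_Ioc]; omega,
      Finset.sum_singleton, hHmid (M+2-2*r) (by omega) (by omega),
      show (M+2-2*r+2*r : ℤ) = M+2 by ring, hHM2,
      show (M+2-2*r-1 : ℤ) = M-2*r+1 by ring]
  -- piece 4
  have hP4 : (∑ i ∈ Finset.Ioc (M+2-2*r) (M+1), H i * H (i + 2*r))
      = ∑ j ∈ Finset.Icc (1:ℤ) (2*r-1),
          4*s^2*((-1:ℝ)^j * (F (M+1-2*r+j) * F (M+1-2*r+2*r-j))) := by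
    apply Finset.sum_nbij' (fun i => i + 2*r - M - 2) (fun j => j + M + 2 - 2*r)
    · intro a ha; simp [Finset.mem_Ioc, Finset.mem_Icc] at ha ⊢; omega
    · intro a ha; simp [Finset.mem_Ioc, Finset.mem_Icc] at ha ⊢; omega
    · intro a _; ring
    · intro a _; ring
    · intro i hi
      simp only [Finset.mem_Ioc] at hi
      rw [hHmid i (by omega) (by omega), hHneg (i+2*r) (by omega) (by omega),
        show (i+2*r-(2*M+3) : ℤ) = -(2*M+3-2*r-i) by ring,
        Fneg hrec h0 (2*M+3-2*r-i),
        show (M+1-2*r+(i+2*r-M-2) : ℤ) = i-1 by ring,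
        show (M+1-2*r+2*r-(i+2*r-M-2) : ℤ) = 2*M+3-2*r-i by ring]
      have hee : (-1:ℝ)^(2*M+3-2*r-i) * (-1:ℝ)^(i+2*r-M-2) = -1 := by
        rw [eps_mul, show (2*M+3-2*r-i+(i+2*r-M-2) : ℤ) = 2*e+1 by omega, eps_odd]
      have hsq := eps_sq (i+2*r-M-2)
      have hsg : -(-1:ℝ)^(2*M+3-2*r-i) = (-1:ℝ)^(i+2*r-M-2) := by
        linear_combination (-(-1:ℝ)^(i+2*r-M-2))*hee + ((-1:ℝ)^(2*M+3-2*r-i))*hsq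
      linear_combination (4*s^2*F (i-1)*F (2*M+3-2*r-i)) * hsg
  -- piece 5
  have hP5 : (∑ i ∈ Finset.Ioc (M+1) (M+2), H i * H (i + 2*r))
      = (s * F (M + 1) - 2 * F M) * (2*s*F (M-2*r+1)) := by
    rw [show Finset.Ioc (M+1) (M+2) = {M+2} by ext x; simp [Finset.mem_Ioc]; omega,
      Finset.sum_singleton, hHM2, hHneg (M+2+2*r) (by omega) (by omega),
      show (M+2+2*r-(2*M+3) : ℤ) = -(2*(e-r)+1) by omega,
      Fneg_odd hrec h0 (e-r), show (2*(e-r)+1 : ℤ) = M-2*r+1 by omega]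
  -- piece 6
  have hP6 : (∑ i ∈ Finset.Ioc (M+2) (2*M+2-2*r), H i * H (i + 2*r))
      = 4*s*(F (M-2*r) * F (M+1)) := by
    have e1 : (∑ i ∈ Finset.Ioc (M+2) (2*M+2-2*r), H i * H (i + 2*r))
        = ∑ k ∈ Finset.Icc (1:ℤ) (M-2*r), 4*s^2*(F k * F (k + 2*r)) := by
      apply Finset.sum_nbij' (fun i => 2*M+3-2*r-i) (fun k => 2*M+3-2*r-k)
      · intro a ha; simp [Finset.mem_Ioc, Finset.mem_Icc] at ha ⊢; omega
      · intro a ha; simp [Finset.mem_Ioc, Finset.mem_Icc] at ha ⊢; omega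
      · intro a _; ring
      · intro a _; ring
      · intro i hi
        simp only [Finset.mem_Ioc] at hi
        rw [hHneg i (by omega) (by omega), hHneg (i+2*r) (by omega) (by omega),
          show (i-(2*M+3) : ℤ) = -(2*M+3-i) by ring,
          show (i+2*r-(2*M+3) : ℤ) = -(2*M+3-2*r-i) by ring,
          Fneg hrec h0 (2*M+3-i), Fneg hrec h0 (2*M+3-2*r-i),
          show (2*M+3-2*r-i+2*r : ℤ) = 2*M+3-i by ring]
        have hee : (-1:ℝ)^(2*M+3-i) * (-1:ℝ)^(2*M+3-2*r-i) = 1 := by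
          rw [eps_mul, show (2*M+3-i+(2*M+3-2*r-i) : ℤ) = 2*(2*M+3-i-r) by ring, eps_even]
        linear_combination (4*s^2*F (2*M+3-i)*F (2*M+3-2*r-i)) * hee
    have hs1 := sum1 hrec h0 (2*r) (e-r) (by omega)
    rw [show (2*(e-r) : ℤ) = M-2*r by omega] at hs1
    rw [show (M-2*r+2*r+1 : ℤ) = M+1 by ring] at hs1
    rw [e1, ← Finset.mul_sum]
    linear_combination 4*s*hs1
  -- piece 7
  have hP7 : (∑ i ∈ Finset.Ioc (2*M+2-2*r) (2*M+3-2*r), H i * H (i + 2*r))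
      = 2*s*F (2*r) := by
    rw [show Finset.Ioc (2*M+2-2*r) (2*M+3-2*r) = {2*M+3-2*r} by
        ext x; simp [Finset.mem_Ioc]; omega,
      Finset.sum_singleton, hHneg (2*M+3-2*r) (by omega) (by omega),
      show (2*M+3-2*r+2*r : ℤ) = 2*M+3 by ring, hHtop,
      show (2*M+3-2*r-(2*M+3) : ℤ) = -(2*r) by ring, Fneg_even hrec h0 r]
    ring
  -- piece 8
  have hP8 : (∑ i ∈ Finset.Ioc (2*M+3-2*r) (2*M+3), H i * H (i + 2*r)) = 0 := by
    apply Finset.sum_eq_zero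
    intro i hi
    simp only [Finset.mem_Ioc] at hi
    rw [hH0 (i+2*r) (by omega)]
    ring
  -- assembled value
  set S2sum := ∑ j ∈ Finset.Icc (1:ℤ) (2*r-1),
      (-1:ℝ)^j * (F (M+1-2*r+j) * F (M+1-2*r+2*r-j)) with hS2def
  have hA : (∑ i ∈ Finset.Icc (1 : ℤ) (2 * M + 3), H i * H (i + 2*r)) =
      4*s*F (2*r) + 8*s*(F (M-2*r) * F (M+1))
        + 4*s*((s * F (M + 1) - 2 * F M) * F (M-2*r+1))
        + 4*s^2*S2sum := by
    rw [hsplit, hP1, hP2, hP3, hP4, hP5, hP6, hP7, hP8, hS2def, Finset.mul_sum]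
    ring
  -- key instances
  have hs4 : (s^2+4 : ℝ) ≠ 0 := by positivity
  have hS2 := sumS2 hrec h0 h1 r (e-r) (M+1-2*r) hr1 (by omega)
  rw [show (2*(M+1-2*r)+2*r : ℤ) = 2*M-2*r+2 by ring, hL0v, hL1v] at hS2
  have hsigMr1 : (-1:ℝ)^(M-r+1) = -(-1:ℝ)^r := by
    rw [show (M-r+1 : ℤ) = 2*e+1 + -r by omega, ← eps_mul, eps_odd, eps_neg]
    ring
  have I1 := prod_formula hrec h0 h1 (M-2*r) (M+1)
  rw [show (M+1+(M-2*r) : ℤ) = 2*M-2*r+1 by ring, show (M+1-(M-2*r) : ℤ) = 2*r+1 by ring,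
    show ((-1:ℝ)^(M-2*r)) = 1 by rw [show (M-2*r : ℤ) = 2*(e-r) by omega, eps_even]] at I1
  have I2 := prod_formula hrec h0 h1 (M-r+1) (M-r+1)
  rw [show (M-r+1+(M-r+1) : ℤ) = 2*M-2*r+2 by ring,
    show (M-r+1-(M-r+1) : ℤ) = 0 by ring, hsigMr1, hL0v] at I2
  have I3 := prod_formula hrec h0 h1 (M-r+1) (M-r)
  rw [show (M-r+(M-r+1) : ℤ) = 2*M-2*r+1 by ring,
    show (M-r-(M-r+1) : ℤ) = -1 by ring, hsigMr1, hLm1v] at I3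
  have I4 := prod_formula hrec h0 h1 r r
  rw [show (r+r : ℤ) = 2*r by ring, show (r-r : ℤ) = 0 by ring, hL0v] at I4
  have I5 := prod_formula hrec h0 h1 (M-2*r+1) (M+1)
  rw [show (M+1+(M-2*r+1) : ℤ) = 2*M-2*r+2 by ring,
    show (M+1-(M-2*r+1) : ℤ) = 2*r by ring,
    show ((-1:ℝ)^(M-2*r+1)) = -1 by rw [show (M-2*r+1 : ℤ) = 2*(e-r)+1 by omega, eps_odd]] at I5
  have I6 := prod_formula hrec h0 h1 (M-2*r+1) M
  rw [show (M+(M-2*r+1) : ℤ) = 2*M-2*r+1 by ring,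
    show (M-(M-2*r+1) : ℤ) = 2*r-1 by ring,
    show ((-1:ℝ)^(M-2*r+1)) = -1 by rw [show (M-2*r+1 : ℤ) = 2*(e-r)+1 by omega, eps_odd]] at I6
  have I7 := prod_formula hrec h0 h1 1 (2*r)
  rw [show (2*r+1 : ℤ) = 2*r+1 by ring, show (2*r-1 : ℤ) = 2*r-1 by ring, h1, zpow_one] at I7
  have hLr2 := LrecU hrec (2*r)
  -- closed-form polynomial value
  have hval : 4*s*F (2*r) + 8*s*(F (M-2*r) * F (M+1))
        + 4*s*((s * F (M + 1) - 2 * F M) * F (M-2*r+1))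
        + 4*s^2*S2sum
      = 4*s*F (2*r) + 4*s*((s * F (M + 1) - 2 * F M) * F (M-2*r+1))
        - 4*s^2*(F (M-r+1))^2 + 8*s*(F (M-r) * F (M-r+1)) - 8*s^2*(F r)^2 := by
    apply mul_left_cancel₀ hs4
    linear_combination 8*s*I1 + 4*s*hS2 + 4*s^2*I2 - 8*s*I3 + 8*s^2*I4 - 8*s*hLr2
  have hzero : 4*s*F (2*r) + 4*s*((s * F (M + 1) - 2 * F M) * F (M-2*r+1))
        - 4*s^2*(F (M-r+1))^2 + 8*s*(F (M-r) * F (M-r+1)) - 8*s^2*(F r)^2 = 0 := by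
    apply mul_left_cancel₀ hs4
    linear_combination 4*s*I7 + 4*s^2*I5 - 8*s*I6 - 4*s^2*I2 + 8*s*I3 - 8*s^2*I4 + 4*s*hLr2
  have hRHS : 8 * s ^ 2 * (F (2 * r) / (2 * s)
          + (s * F (M + 1) - 2 * F M) * F (M - 2 * r + 1) / (2 * s)
          - (F (M - r + 1)) ^ 2 / 2
          + F (M - r) * F (M - r + 1) / s
          - (F r) ^ 2)
      = 4*s*F (2*r) + 4*s*((s * F (M + 1) - 2 * F M) * F (M-2*r+1))
        - 4*s^2*(F (M-r+1))^2 + 8*s*(F (M-r) * F (M-r+1)) - 8*s^2*(F r)^2 := by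
    field_simp
    ring
  constructor
  · rw [hA, hval, hRHS]
  · rw [hA, hval, hzero]
end
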